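/- With p(w) = e^{-1/|w|} and π(dw) = dw/(2w²) on {|w| ≥ 1}, and g(w) = sign(w), one has ⟨g, Qⁿg⟩ = ∫_1^∞ e^{-n/w} dw/w² = (1/n)∫_0^n e^{-x} dx ~ 1/n as n → ∞. -/

import Mathlib

open MeasureTheory Filter Topology Set NNReal ENNReal

lemma hasDeriv_aux {c : ℝ} (hc : 0 < c) {x : ℝ} (hx : x ≠ 0) :
    HasDerivAt (fun w : ℝ => Real.exp (-(c / w)) / c) (Real.exp (-(c / x)) / x ^ 2) x := by
  have h1 : HasDerivAt (fun w : ℝ => -(c / w)) (c / x ^ 2) x := by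
    simpa [Pi.neg_def, div_eq_mul_inv, neg_mul, mul_comm] using (((hasDerivAt_inv hx).const_mul c).neg)
  have h2 := (h1.exp).div_const c
  refine h2.congr_deriv ?_
  field_simp

lemma integral_exp_div_Ioi {c : ℝ} (hc : 0 < c) :
    IntegrableOn (fun w : ℝ => Real.exp (-(c / w)) / w ^ 2) (Ioi 1) ∧
    ∫ w in Ioi (1:ℝ), Real.exp (-(c / w)) / w ^ 2 = (1 - Real.exp (-c)) / c := by
  have hderiv : ∀ x ∈ Ici (1:ℝ), HasDerivAt (fun w => Real.exp (-(c / w)) / c)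
      (Real.exp (-(c / x)) / x ^ 2) x := fun x hx =>
    hasDeriv_aux hc (by intro h; rw [h] at hx; simp at hx; linarith)
  have hpos : ∀ x ∈ Ioi (1:ℝ), 0 ≤ Real.exp (-(c / x)) / x ^ 2 := fun x hx => by positivity
  have htend : Tendsto (fun w : ℝ => Real.exp (-(c / w)) / c) atTop (𝓝 (1 / c)) := by
    have h0 : Tendsto (fun w : ℝ => -(c / w)) atTop (𝓝 0) := by
      simpa using ((tendsto_const_nhds (x := c)).div_atTop (tendsto_id (α := ℝ))).neg
    have h1 := (Real.continuous_exp.tendsto 0).comp h0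
    have h2 := h1.div_const c
    simpa [Function.comp] using h2
  refine ⟨integrableOn_Ioi_deriv_of_nonneg' hderiv hpos htend, ?_⟩
  rw [integral_Ioi_of_hasDerivAt_of_nonneg' hderiv hpos htend]
  rw [div_one]
  ring

lemma integral_exp_neg_Ioc {c : ℝ} (hc : 0 ≤ c) :
    ∫ x in Ioc (0:ℝ) c, Real.exp (-x) = 1 - Real.exp (-c) := by
  rw [← intervalIntegral.integral_of_le hc,
    intervalIntegral.integral_comp_neg (fun x => Real.exp x), integral_exp]
  simp

lemma pi_integral_eq (n : ℕ) (hn : 1 ≤ n) :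
    ∫ w, Real.sign w * (Real.exp (-(1 / |w|)) ^ n * Real.sign w)
      ∂((volume.restrict {w : ℝ | 1 ≤ |w|}).withDensity
        (fun w => ENNReal.ofReal (1 / (2 * w ^ 2))))
      = ∫ w in Set.Ioi (1 : ℝ), Real.exp (-((n : ℝ) / w)) / w ^ 2 := by
  have hc : (0:ℝ) < n := by exact_mod_cast hn
  set h : ℝ → ℝ := fun w => Real.exp (-((n : ℝ) / |w|)) / (2 * w ^ 2) with hh
  have hmeas : Measurable fun w : ℝ => Real.toNNReal (1 / (2 * w ^ 2)) := by
    measurability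
  have step1 : ∫ w, Real.sign w * (Real.exp (-(1 / |w|)) ^ n * Real.sign w)
      ∂((volume.restrict {w : ℝ | 1 ≤ |w|}).withDensity
        (fun w => ENNReal.ofReal (1 / (2 * w ^ 2))))
      = ∫ w in {w : ℝ | 1 ≤ |w|},
          (Real.toNNReal (1 / (2 * w ^ 2)) : ℝ≥0)
            • (Real.sign w * (Real.exp (-(1 / |w|)) ^ n * Real.sign w)) := by
    exact integral_withDensity_eq_integral_smul hmeas _
  have hSeq : {w : ℝ | 1 ≤ |w|} = Iic (-1) ∪ Ici 1 := by
    ext w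
    simp only [mem_setOf_eq, le_abs, mem_union, mem_Iic, mem_Ici]
    constructor <;> rintro (h | h) <;> first | (left; linarith) | (right; linarith)
  have hSmeas : MeasurableSet {w : ℝ | 1 ≤ |w|} := by
    rw [hSeq]; exact measurableSet_Iic.union measurableSet_Ici
  have step2 : ∫ w in {w : ℝ | 1 ≤ |w|},
          (Real.toNNReal (1 / (2 * w ^ 2)) : ℝ≥0)
            • (Real.sign w * (Real.exp (-(1 / |w|)) ^ n * Real.sign w))
      = ∫ w in {w : ℝ | 1 ≤ |w|}, h w := by
    apply setIntegral_congr_fun hSmeas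
    intro w hw
    have hw1 : (1:ℝ) ≤ |w| := hw
    have hw0 : w ≠ 0 := by intro h0; rw [h0] at hw1; simp at hw1; linarith
    have hsign : Real.sign w * Real.sign w = 1 := by
      rcases hw0.lt_or_gt with h | h
      · rw [Real.sign_of_neg h]; norm_num
      · rw [Real.sign_of_pos h]; norm_num
    have hpow : Real.exp (-(1 / |w|)) ^ n = Real.exp (-((n:ℝ) / |w|)) := by
      rw [← Real.exp_nat_mul]; ring_nf
    have hnn : (0:ℝ) ≤ 1 / (2 * w ^ 2) := by positivity
    simp only [NNReal.smul_def, Real.coe_toNNReal _ hnn, hh]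
    rw [show Real.sign w * (Real.exp (-(1 / |w|)) ^ n * Real.sign w)
        = Real.exp (-(1 / |w|)) ^ n * (Real.sign w * Real.sign w) by ring,
      hsign, hpow]
    rw [smul_eq_mul]
    field_simp

  -- integrability and symmetry
  have I := (integral_exp_div_Ioi hc).1
  have heqIoi : EqOn (fun w : ℝ => (Real.exp (-((n:ℝ) / w)) / w ^ 2) / 2) h (Ioi 1) := by
    intro w hw
    have hw0 : (0:ℝ) < w := lt_trans one_pos hw
    simp only [hh, abs_of_pos hw0]
    field_simp
  have hIoi : IntegrableOn h (Ioi 1) :=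
    IntegrableOn.congr_fun (I.div_const 2) heqIoi measurableSet_Ioi
  have hIci : IntegrableOn h (Ici 1) :=
    (integrableOn_Ici_iff_integrableOn_Ioi (by simp)).2 hIoi
  have heven : ∀ x : ℝ, h (-x) = h x := by
    intro x; simp only [hh, abs_neg, neg_sq]
  have hIic : IntegrableOn h (Iic (-1)) := by
    rw [← (Measure.measurePreserving_neg (volume : Measure ℝ)).integrableOn_comp_preimage
      (Homeomorph.neg ℝ).measurableEmbedding]
    have : h ∘ Neg.neg = h := funext heven
    rw [this]
    simpa using hIci
  have hIicEq : ∫ x in Iic (-1:ℝ), h x = ∫ x in Ioi (1:ℝ), h x := by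
    have := integral_comp_neg_Iic (-1:ℝ) h
    simp_rw [heven, neg_neg] at this
    exact this
  have hIoiEq : ∫ x in Ioi (1:ℝ), h x
      = (∫ w in Ioi (1:ℝ), Real.exp (-((n:ℝ) / w)) / w ^ 2) / 2 := by
    rw [← integral_div]
    exact (setIntegral_congr_fun measurableSet_Ioi heqIoi).symm
  rw [step1, step2, hSeq,
    setIntegral_union (by rw [Set.disjoint_left]; intro a ha hb; simp at ha hb; linarith)
      measurableSet_Ici hIic hIci,
    integral_Ici_eq_integral_Ioi, hIicEq, hIoiEq]
  ring

/-- with `p(w) = exp(-1/|w|)`, `π(dw) = dw/(2w²)` on `{|w| ≥ 1}`,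
and `g = sign`, one has `⟨g, Qⁿ g⟩ = ∫ pⁿ dπ = ∫_1^∞ e^{-n/w} dw/w²
= (1/n) ∫_0^n e^{-x} dx ∼ 1/n` as `n → ∞`. -/
theorem sign_correlations :
    let p : ℝ → ℝ := fun w => Real.exp (-(1 / |w|))
    let π : Measure ℝ := (volume.restrict {w : ℝ | 1 ≤ |w|}).withDensity
      (fun w => ENNReal.ofReal (1 / (2 * w ^ 2)))
    (∀ n : ℕ, 1 ≤ n →
      (∫ w, Real.sign w * (p w ^ n * Real.sign w) ∂π
          = ∫ w in Set.Ioi (1 : ℝ), Real.exp (-((n : ℝ) / w)) / w ^ 2) ∧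
      (∫ w in Set.Ioi (1 : ℝ), Real.exp (-((n : ℝ) / w)) / w ^ 2
          = (1 / (n : ℝ)) * ∫ x in Set.Ioc (0 : ℝ) (n : ℝ), Real.exp (-x))) ∧
    Tendsto (fun n : ℕ =>
        (n : ℝ) * ∫ w, Real.sign w * (p w ^ n * Real.sign w) ∂π)
      atTop (𝓝 1) := by
  intro p π
  have key : ∀ n : ℕ, 1 ≤ n → ∫ w, Real.sign w * (p w ^ n * Real.sign w) ∂π
      = ∫ w in Set.Ioi (1:ℝ), Real.exp (-((n:ℝ)/w)) / w^2 := fun n hn => pi_integral_eq n hn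
  have key2 : ∀ n : ℕ, 1 ≤ n → ∫ w in Set.Ioi (1:ℝ), Real.exp (-((n:ℝ)/w)) / w^2
      = (1/(n:ℝ)) * ∫ x in Set.Ioc (0:ℝ) (n:ℝ), Real.exp (-x) := by
    intro n hn
    have hc : (0:ℝ) < n := by exact_mod_cast hn
    rw [(integral_exp_div_Ioi hc).2, integral_exp_neg_Ioc hc.le]
    ring
  refine ⟨fun n hn => ⟨key n hn, key2 n hn⟩, ?_⟩
  have hev : ∀ᶠ n : ℕ in atTop, (1 - Real.exp (-(n:ℝ)))
      = (n:ℝ) * ∫ w, Real.sign w * (p w ^ n * Real.sign w) ∂π := by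
    filter_upwards [eventually_ge_atTop 1] with n hn
    have hc : (0:ℝ) < n := by exact_mod_cast hn
    rw [key n hn, (integral_exp_div_Ioi hc).2]
    field_simp
  have h2 : Tendsto (fun n : ℕ => 1 - Real.exp (-(n:ℝ))) atTop (𝓝 1) := by
    have h3 := Real.tendsto_exp_neg_atTop_nhds_zero.comp
      (tendsto_natCast_atTop_atTop (R := ℝ))
    simpa using (tendsto_const_nhds (x := (1:ℝ))).sub h3
  exact h2.congr' hev
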